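/- Let k be a field of characteristic ≠ 2 and let E be a k-vector space of dimension 2n with a nondegenerate symmetric bilinear form B. Let N and N' be Lagrangians of (E, B), and let φ be an isometry of (E, B) with φ(N) = N'. Then det φ = (−1)^{n−q}, where q = dim_k(N ∩ N'). -/

import Mathlib

open Module

/-- The orthogonal complement of a submodule with respect to a bilinear form:
`perpB B N = {x | B(x,y) = 0 for all y ∈ N}`. -/
def perpB {k M : Type*} [Field k] [AddCommGroup M] [Module k M]
    (B : M →ₗ[k] M →ₗ[k] k) (N : Submodule k M) : Submodule k M where
  carrier := {x | ∀ y ∈ N, B x y = 0}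
  add_mem' := by
    intro a b ha hb y hy
    simp [map_add, ha y hy, hb y hy]
  zero_mem' := by
    intro y hy
    simp
  smul_mem' := by
    intro c a ha y hy
    simp [map_smul, ha y hy]


lemma det_eq_restrict_mul_proj {k E : Type*} [Field k] [AddCommGroup E] [Module k E]
    [FiniteDimensional k E] (N M : Submodule k E) (hc : IsCompl N M)
    (f : E →ₗ[k] E) (h1 : ∀ x ∈ N, f x ∈ N) :
    LinearMap.det f =
      LinearMap.det (f.restrict h1) *
      LinearMap.det ((M.linearProjOfIsCompl N hc.symm) ∘ₗ f ∘ₗ M.subtype) := by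
  classical
  set e := Submodule.prodEquivOfIsCompl N M hc with he
  have hdecomp : ∀ x : E,
      e.symm x = (N.linearProjOfIsCompl M hc x, M.linearProjOfIsCompl N hc.symm x) := by
    intro x
    rw [LinearEquiv.symm_apply_eq]
    exact (Submodule.projection_add_projection_eq_self hc x).symm
  have hprojN : ∀ (x : E) (hx : x ∈ N), N.linearProjOfIsCompl M hc x = ⟨x, hx⟩ := by
    intro x hx
    exact Submodule.linearProjOfIsCompl_apply_left hc ⟨x, hx⟩
  have hprojM : ∀ (x : E), x ∈ N → M.linearProjOfIsCompl N hc.symm x = 0 := by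
    intro x hx
    exact Submodule.linearProjOfIsCompl_apply_right' hc.symm hx
  have heapp : ∀ p : N × M, e p = (p.1 : E) + (p.2 : E) := fun p => rfl
  set g := (e.symm : E →ₗ[k] N × M) ∘ₗ f ∘ₗ (e : N × M →ₗ[k] E) with hg
  have hdet : LinearMap.det g = LinearMap.det f := by
    have := LinearMap.det_conj f e.symm
    simpa [hg] using this
  set bN := Module.finBasis k N
  set bM := Module.finBasis k M
  have hpinl : ∀ j, (bN.prod bM) (Sum.inl j) = (bN j, 0) := fun j =>
    Prod.ext (bN.prod_apply_inl_fst bM j) (bN.prod_apply_inl_snd bM j)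
  have hpinr : ∀ j, (bN.prod bM) (Sum.inr j) = (0, bM j) := fun j =>
    Prod.ext (bN.prod_apply_inr_fst bM j) (bN.prod_apply_inr_snd bM j)
  rw [← hdet, ← LinearMap.det_toMatrix (bN.prod bM)]
  have hmat : LinearMap.toMatrix (bN.prod bM) (bN.prod bM) g =
      Matrix.fromBlocks (LinearMap.toMatrix bN bN (f.restrict h1))
        (Matrix.of fun i j => bN.repr ((N.linearProjOfIsCompl M hc) (f (bM j))) i)
        0
        (LinearMap.toMatrix bM bM ((M.linearProjOfIsCompl N hc.symm) ∘ₗ f ∘ₗ M.subtype)) := by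
    ext (i|i) (j|j) <;>
      simp only [LinearMap.toMatrix_apply, Basis.prod_repr_inl, Basis.prod_repr_inr,
        Matrix.fromBlocks, hg, LinearMap.coe_comp, LinearEquiv.coe_coe, Function.comp_apply,
        Matrix.of_apply, Sum.elim_inl, Sum.elim_inr, hdecomp, Submodule.coe_prodEquivOfIsCompl',
        LinearMap.restrict_apply, Submodule.coe_subtype, Submodule.coe_zero, add_zero, zero_add,
        Matrix.zero_apply, hpinl, hpinr, heapp, ZeroMemClass.coe_zero]
    all_goals first
      | rw [hprojN _ (h1 _ (bN j).2)]
      | (rw [hprojM _ (h1 _ (bN j).2)]; simp)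
      | rfl
  rw [hmat, Matrix.det_fromBlocks_zero₂₁, LinearMap.det_toMatrix, LinearMap.det_toMatrix]

lemma mem_perpB {k M : Type*} [Field k] [AddCommGroup M] [Module k M]
    (B : M →ₗ[k] M →ₗ[k] k) (N : Submodule k M) (x : M) :
    x ∈ perpB B N ↔ ∀ y ∈ N, B x y = 0 := Iff.rfl

section basics
variable {k E : Type*} [Field k] [AddCommGroup E] [Module k E] [FiniteDimensional k E]
  (B : E →ₗ[k] E →ₗ[k] k)

lemma perpB_eq_orthogonal (hsymm : ∀ x y : E, B x y = B y x) (N : Submodule k E) :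
    perpB B N = LinearMap.BilinForm.orthogonal B N := by
  ext x
  simp only [mem_perpB, LinearMap.BilinForm.mem_orthogonal_iff]
  constructor
  · intro h y hy; rw [hsymm]; exact h y hy
  · intro h y hy; rw [hsymm]; exact h y hy

lemma finrank_perpB (hsymm : ∀ x y : E, B x y = B y x)
    (hnondeg : ∀ x : E, (∀ y : E, B x y = 0) → x = 0) (N : Submodule k E) :
    finrank k (perpB B N) = finrank k E - finrank k N := by
  rw [perpB_eq_orthogonal B hsymm]
  exact LinearMap.BilinForm.finrank_orthogonal (B := B)
    ⟨hnondeg, fun y hy => hnondeg y (fun x => by rw [hsymm]; exact hy x)⟩ N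

lemma finrank_lagrangian {n : ℕ} (hdim : finrank k E = 2 * n)
    (hsymm : ∀ x y : E, B x y = B y x)
    (hnondeg : ∀ x : E, (∀ y : E, B x y = 0) → x = 0)
    {N : Submodule k E} (hN : N = perpB B N) : finrank k N = n := by
  have h := finrank_perpB B hsymm hnondeg N
  rw [← hN, hdim] at h
  have : finrank k N ≤ 2 * n := hdim ▸ Submodule.finrank_le N
  omega

lemma lag_map (hsymm : ∀ x y : E, B x y = B y x) {N : Submodule k E} (hN : N = perpB B N)
    (g : E →ₗ[k] E) (hbij : Function.Bijective g)
    (hiso : ∀ x y : E, B (g x) (g y) = B x y) : N.map g = perpB B (N.map g) := by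
  ext x
  obtain ⟨z, rfl⟩ := hbij.surjective x
  simp only [mem_perpB, Submodule.mem_map]
  constructor
  · rintro ⟨w, hw, hgw⟩ y ⟨u, hu, rfl⟩
    have hz : w = z := hbij.injective hgw
    subst hz
    rw [hiso]
    rw [hN] at hw
    exact hw u hu
  · intro h
    refine ⟨z, ?_, rfl⟩
    rw [hN, mem_perpB]
    intro y hy
    have := h (g y) ⟨y, hy, rfl⟩
    rwa [hiso] at this
end basics

lemma det_dualMap' {k V : Type*} [Field k] [AddCommGroup V] [Module k V]
    [FiniteDimensional k V] (f : V →ₗ[k] V) :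
    LinearMap.det (f.dualMap) = LinearMap.det f := by
  classical
  set b := Module.finBasis k V
  rw [← LinearMap.det_toMatrix b f, ← LinearMap.det_toMatrix b.dualBasis f.dualMap]
  rw [show (f.dualMap : Module.Dual k V →ₗ[k] Module.Dual k V) =
      Module.Dual.transpose (R := k) f from rfl]
  rw [LinearMap.toMatrix_transpose, Matrix.det_transpose]

lemma det_stab {k E : Type*} [Field k] [AddCommGroup E] [Module k E] [FiniteDimensional k E]
    (B : E →ₗ[k] E →ₗ[k] k)
    (hsymm : ∀ x y : E, B x y = B y x)
    (hnondeg : ∀ x : E, (∀ y : E, B x y = 0) → x = 0)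
    {N : Submodule k E} (hN : N = perpB B N)
    (g : E →ₗ[k] E) (hbij : Function.Bijective g)
    (hiso : ∀ x y : E, B (g x) (g y) = B x y)
    (hmapg : N.map g = N) : LinearMap.det g = 1 := by
  classical
  obtain ⟨M, hc⟩ := Submodule.exists_isCompl N
  have h1 : ∀ x ∈ N, g x ∈ N := fun x hx => hmapg ▸ Submodule.mem_map_of_mem hx
  -- restriction of g to N as an equiv
  have hinj : Function.Injective (g.restrict h1) := fun a b hab =>
    Subtype.ext (hbij.injective (congrArg Subtype.val hab))
  have hsurj : Function.Surjective (g.restrict h1) := by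
    intro y
    have : (y : E) ∈ N.map g := by rw [hmapg]; exact y.2
    obtain ⟨x, hx, hgx⟩ := this
    exact ⟨⟨x, hx⟩, Subtype.ext hgx⟩
  set gN : N ≃ₗ[k] N := LinearEquiv.ofBijective (g.restrict h1) ⟨hinj, hsurj⟩ with hgN
  -- the pairing M → Dual N
  set p : M →ₗ[k] Module.Dual k N := (B.compl₂ N.subtype) ∘ₗ M.subtype with hp
  have hpinj : Function.Injective p := by
    rw [← LinearMap.ker_eq_bot, Submodule.eq_bot_iff]
    intro m hm
    have hm' : ∀ y ∈ N, B (m : E) y = 0 := by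
      intro y hy
      have := congrFun (congrArg DFunLike.coe hm) ⟨y, hy⟩
      simpa [hp] using this
    have hmN : (m : E) ∈ N := by rw [hN, mem_perpB]; exact hm'
    have : (m : E) ∈ N ⊓ M := ⟨hmN, m.2⟩
    rw [hc.disjoint.eq_bot] at this
    exact Subtype.ext this
  have hfr : finrank k M = finrank k (Module.Dual k N) := by
    rw [Subspace.dual_finrank_eq]
    have h2 := Submodule.finrank_add_eq_of_isCompl hc
    have h3 := finrank_perpB B hsymm hnondeg N
    rw [← hN] at h3
    omega
  have hpbij : Function.Bijective p :=
    ⟨hpinj, (LinearMap.injective_iff_surjective_of_finrank_eq_finrank hfr).mp hpinj⟩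
  set pe : M ≃ₗ[k] Module.Dual k N := LinearEquiv.ofBijective p hpbij with hpe
  -- the component map on M
  set g₂ : M →ₗ[k] M := (M.linearProjOfIsCompl N hc.symm) ∘ₗ g ∘ₗ M.subtype with hg₂
  have hBNN : ∀ x ∈ N, ∀ y ∈ N, B x y = 0 := by
    intro x hx y hy
    rw [hN, mem_perpB] at hx
    exact hx y hy
  have hkey : ∀ (m : M) (w : N), p (g₂ m) w = p m (gN.symm w) := by
    intro m w
    have hdec := Submodule.projection_add_projection_eq_self hc (g (m : E))
    have hPN : ((N.linearProjOfIsCompl M hc (g (m:E))) : E) ∈ N := Submodule.coe_mem _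
    have e1 : p (g₂ m) w = B ((M.linearProjOfIsCompl N hc.symm (g (m:E))) : E) (w : E) := by
      simp [hp, hg₂]
    have e2 : B ((M.linearProjOfIsCompl N hc.symm (g (m:E))) : E) (w : E) = B (g (m:E)) (w : E) := by
      have : B (g (m:E)) (w:E) =
          B ((N.linearProjOfIsCompl M hc (g (m:E))) : E) (w : E) +
          B ((M.linearProjOfIsCompl N hc.symm (g (m:E))) : E) (w : E) := by
        conv_lhs => rw [← hdec]
        simp [map_add]
        rfl
      rw [this, hBNN _ hPN _ w.2, zero_add]
    have e3 : B (g (m:E)) (w : E) = B (m : E) ((gN.symm w : N) : E) := by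
      have : (w : E) = g ((gN.symm w : N) : E) := by
        have := gN.apply_symm_apply w
        rw [hgN] at this
        exact (congrArg Subtype.val this).symm
      rw [this, hiso]
    rw [e1, e2, e3]
    simp [hp]
  have hcomm : p ∘ₗ g₂ = (gN.symm.toLinearMap).dualMap ∘ₗ p := by
    ext m w
    simpa using hkey m w
  have hg₂det : LinearMap.det g₂ = LinearMap.det (gN.symm.toLinearMap) := by
    have : g₂ = (pe.symm : Module.Dual k N →ₗ[k] M) ∘ₗ
        ((gN.symm.toLinearMap).dualMap ∘ₗ (pe : M →ₗ[k] Module.Dual k N)) := by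
      refine LinearMap.ext fun m => ?_
      apply pe.injective
      have := congrFun (congrArg DFunLike.coe hcomm) m
      simp only [LinearMap.coe_comp, Function.comp_apply, LinearEquiv.coe_coe,
        LinearEquiv.apply_symm_apply] at this ⊢
      exact this
    rw [this]
    have hconj : LinearMap.det ((pe.symm : Module.Dual k N →ₗ[k] M) ∘ₗ
        (((gN.symm.toLinearMap).dualMap) ∘ₗ (pe.symm.symm : M →ₗ[k] Module.Dual k N))) =
        LinearMap.det ((gN.symm.toLinearMap).dualMap) := LinearMap.det_conj _ pe.symm
    simpa [det_dualMap'] using hconj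
  have hdetprod := det_eq_restrict_mul_proj N M hc g h1
  rw [hdetprod, ← hg₂, hg₂det]
  have : LinearMap.det (g.restrict h1) * LinearMap.det (gN.symm.toLinearMap) =
      LinearMap.det ((g.restrict h1) ∘ₗ gN.symm.toLinearMap) := (LinearMap.det_comp _ _).symm
  rw [this]
  have hidm : (g.restrict h1) ∘ₗ gN.symm.toLinearMap = LinearMap.id := by
    refine LinearMap.ext fun w => ?_
    have h5 : (g.restrict h1) (gN.symm w) = gN (gN.symm w) := rfl
    rw [LinearMap.comp_apply]
    show (g.restrict h1) (gN.symm w) = w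
    rw [h5, gN.apply_symm_apply]
  rw [hidm, LinearMap.det_id]

section refl
variable {k E : Type*} [Field k] [AddCommGroup E] [Module k E] [FiniteDimensional k E]
  (B : E →ₗ[k] E →ₗ[k] k)

lemma refl_apply (v : E) (x : E) :
    ((LinearMap.id : E →ₗ[k] E) + (B.flip v).smulRight v) x = x + B x v • v := by
  simp [LinearMap.add_apply, LinearMap.smulRight_apply, LinearMap.flip_apply]

lemma det_reflMap (hchar : (2 : k) ≠ 0) (v : E) (hBvv : B v v = -2) :
    LinearMap.det ((LinearMap.id : E →ₗ[k] E) + (B.flip v).smulRight v) = -1 := by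
  classical
  set ρ := (LinearMap.id : E →ₗ[k] E) + (B.flip v).smulRight v with hρdef
  have hρ : ∀ x, ρ x = x + B x v • v := refl_apply B v
  have hv0 : v ≠ 0 := by
    intro h
    rw [h] at hBvv
    simp only [map_zero, LinearMap.zero_apply] at hBvv
    exact hchar (neg_eq_zero.mp hBvv.symm)
  set Nv := Submodule.span k {v} with hNv
  set Mv := LinearMap.ker (B.flip v) with hMv
  have hBv : ∀ x : E, B.flip v x = B x v := fun x => rfl
  have hcompl : IsCompl Nv Mv := by
    constructor
    · rw [Submodule.disjoint_def]
      intro x hx hker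
      obtain ⟨c, rfl⟩ := Submodule.mem_span_singleton.mp hx
      rw [hMv, LinearMap.mem_ker] at hker
      simp only [hBv, map_smul, LinearMap.smul_apply, smul_eq_mul, hBvv] at hker
      have hc : c = 0 := by
        rcases mul_eq_zero.mp hker with h | h
        · exact h
        · exact absurd (neg_eq_zero.mp h) hchar
      rw [hc, zero_smul]
    · rw [codisjoint_iff, eq_top_iff]
      intro x _
      set a := -(B x v) / 2 with ha
      have hx2 : x - a • v ∈ Mv := by
        rw [hMv, LinearMap.mem_ker]
        simp only [hBv, map_sub, map_smul, LinearMap.sub_apply, LinearMap.smul_apply,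
          smul_eq_mul, hBvv]
        field_simp [ha]
        rw [ha, div_mul_cancel₀ _ hchar, neg_neg, sub_self]
      exact Submodule.mem_sup.mpr ⟨a • v, Submodule.smul_mem _ _ (Submodule.mem_span_singleton_self v),
        x - a • v, hx2, by abel⟩
  have h1v : ∀ x ∈ Nv, ρ x ∈ Nv := by
    intro x hx
    obtain ⟨c, rfl⟩ := Submodule.mem_span_singleton.mp hx
    rw [hρ]
    exact Submodule.add_mem _ (Submodule.smul_mem _ _ (Submodule.mem_span_singleton_self v))
      (Submodule.smul_mem _ _ (Submodule.mem_span_singleton_self v))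
  rw [det_eq_restrict_mul_proj Nv Mv hcompl ρ h1v]
  have hrestr : ρ.restrict h1v = -LinearMap.id := by
    refine LinearMap.ext fun x => ?_
    apply Subtype.ext
    obtain ⟨c, hc⟩ := Submodule.mem_span_singleton.mp x.2
    have : ρ (x : E) = -(x : E) := by
      rw [hρ, ← hc]
      simp only [map_smul, LinearMap.smul_apply, smul_eq_mul, hBvv]
      module
    simpa [LinearMap.restrict_apply] using this
  have hproj : (Mv.linearProjOfIsCompl Nv hcompl.symm) ∘ₗ ρ ∘ₗ Mv.subtype = LinearMap.id := by
    refine LinearMap.ext fun m => ?_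
    have hm : B (m : E) v = 0 := m.2
    have : ρ (m : E) = (m : E) := by rw [hρ, hm, zero_smul, add_zero]
    simp only [LinearMap.comp_apply, Submodule.coe_subtype, this, LinearMap.id_apply]
    exact Submodule.linearProjOfIsCompl_apply_left hcompl.symm m
  rw [hrestr, hproj, LinearMap.det_id, mul_one]
  have : (-LinearMap.id : Nv →ₗ[k] Nv) = (-1 : k) • LinearMap.id := by
    ext x; simp
  rw [this, LinearMap.det_smul, LinearMap.det_id, finrank_span_singleton hv0, pow_one, mul_one]
end refl

/-- Let `E` be a `2n`-dimensional vector space over a field `k` of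
characteristic ≠ 2 with a nondegenerate symmetric bilinear form `B`. If `N`, `N'` are
Lagrangians and `φ` is an isometry of `(E,B)` with `φ(N) = N'`, then
`det φ = (-1)^(n - q)` where `q = dim (N ∩ N')`. -/
theorem isometry_det_eq_neg_one_pow
    {k E : Type*} [Field k] [AddCommGroup E] [Module k E] [FiniteDimensional k E]
    (hchar : (2 : k) ≠ 0)
    (n : ℕ) (hdim : Module.finrank k E = 2 * n)
    (B : E →ₗ[k] E →ₗ[k] k)
    (hsymm : ∀ x y : E, B x y = B y x)
    (hnondeg : ∀ x : E, (∀ y : E, B x y = 0) → x = 0)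
    (N N' : Submodule k E)
    (hN : N = perpB B N) (hN' : N' = perpB B N')
    (φ : E →ₗ[k] E) (hbij : Function.Bijective φ)
    (hiso : ∀ x y : E, B (φ x) (φ y) = B x y)
    (hmap : N.map φ = N') :
    LinearMap.det φ = (-1 : k) ^ (n - Module.finrank k ↥(N ⊓ N')) := by
  have key : ∀ (m : ℕ) (N N' : Submodule k E), N = perpB B N → N' = perpB B N' →
      ∀ (φ : E →ₗ[k] E), Function.Bijective φ → (∀ x y : E, B (φ x) (φ y) = B x y) →
      N.map φ = N' → n - finrank k ↥(N ⊓ N') = m → LinearMap.det φ = (-1 : k) ^ m := by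
    intro m
    induction m with
    | zero =>
      intro N N' hN hN' φ hbij hiso hmap h0
      have hfrN : finrank k N = n := finrank_lagrangian B hdim hsymm hnondeg hN
      have hfrN' : finrank k N' = n := finrank_lagrangian B hdim hsymm hnondeg hN'
      have hqle : finrank k ↥(N ⊓ N') ≤ n := hfrN ▸ Submodule.finrank_mono inf_le_left
      have hq : finrank k ↥(N ⊓ N') = n := by omega
      have hinf : N ⊓ N' = N :=
        Submodule.eq_of_le_of_finrank_le inf_le_left (by omega)
      have hle : N ≤ N' := inf_eq_left.mp hinf
      have hNN' : N = N' := Submodule.eq_of_le_of_finrank_le hle (by omega)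
      subst hNN'
      rw [pow_zero]
      exact det_stab B hsymm hnondeg hN φ hbij hiso hmap
    | succ m ih =>
      intro N N' hN hN' φ hbij hiso hmap hsucc
      have hfrN : finrank k N = n := finrank_lagrangian B hdim hsymm hnondeg hN
      have hfrN' : finrank k N' = n := finrank_lagrangian B hdim hsymm hnondeg hN'
      have hqle : finrank k ↥(N ⊓ N') ≤ n := hfrN ▸ Submodule.finrank_mono inf_le_left
      have hqlt : finrank k ↥(N ⊓ N') < n := by omega
      -- pick f ∈ N' \ N
      have hnle : ¬(N' ≤ N) := by
        intro hle
        have : N' = N := Submodule.eq_of_le_of_finrank_le hle (by omega)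
        rw [this, inf_idem, hfrN] at hqlt
        omega
      obtain ⟨f, hfN', hfN⟩ := SetLike.not_le_iff_exists.mp hnle
      -- pick e ∈ N with B e f = 1
      have hfP : ¬(∀ y ∈ N, B f y = 0) := by
        intro h
        exact hfN (hN ▸ (mem_perpB B N f).mpr h)
      push_neg at hfP
      obtain ⟨e₀, he₀N, he₀⟩ := hfP
      set e := (B f e₀)⁻¹ • e₀ with hedef
      have heN : e ∈ N := Submodule.smul_mem _ _ he₀N
      have hBfe : B f e = 1 := by
        rw [hedef, map_smul, smul_eq_mul, inv_mul_cancel₀ he₀]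
      have hBef : B e f = 1 := by rw [hsymm]; exact hBfe
      have hBNN : ∀ x ∈ N, ∀ y ∈ N, B x y = 0 := by
        intro x hx y hy
        rw [hN, mem_perpB] at hx
        exact hx y hy
      have hBN'N' : ∀ x ∈ N', ∀ y ∈ N', B x y = 0 := by
        intro x hx y hy
        rw [hN', mem_perpB] at hx
        exact hx y hy
      have hBee : B e e = 0 := hBNN e heN e heN
      have hBff : B f f = 0 := hBN'N' f hfN' f hfN'
      set v := e - f with hvdef
      have hBvv : B v v = -2 := by
        rw [hvdef]
        simp only [map_sub, LinearMap.sub_apply, hBee, hBff, hBef, hBfe]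
        ring
      set ρ := (LinearMap.id : E →ₗ[k] E) + (B.flip v).smulRight v with hρdef
      have hρ : ∀ x, ρ x = x + B x v • v := refl_apply B v
      have hρiso : ∀ x y, B (ρ x) (ρ y) = B x y := by
        intro x y
        rw [hρ, hρ]
        simp only [map_add, map_smul, LinearMap.add_apply, LinearMap.smul_apply, smul_eq_mul]
        rw [hBvv, hsymm v y]
        ring
      have hρρ : ∀ x, ρ (ρ x) = x := by
        intro x
        rw [hρ, hρ]
        simp only [map_add, map_smul, LinearMap.add_apply, LinearMap.smul_apply, smul_eq_mul,
          hBvv]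
        module
      have hρbij : Function.Bijective ρ := Function.Involutive.bijective hρρ
      have hdetρ : LinearMap.det ρ = -1 := det_reflMap B hchar v hBvv
      -- the new Lagrangian
      set N₂ := N.map ρ with hN₂def
      have hN₂ : N₂ = perpB B N₂ := lag_map B hsymm hN ρ hρbij hρiso
      have hρρc : ρ ∘ₗ ρ = LinearMap.id := LinearMap.ext hρρ
      set ψ := φ ∘ₗ ρ with hψdef
      have hψbij : Function.Bijective ψ := hbij.comp hρbij
      have hψiso : ∀ x y : E, B (ψ x) (ψ y) = B x y := by
        intro x y
        rw [hψdef]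
        simp only [LinearMap.comp_apply]
        rw [hiso, hρiso]
      have hmapψ : N₂.map ψ = N' := by
        have h7 : Submodule.map ρ N₂ = N := by
          rw [hN₂def, ← Submodule.map_comp, hρρc, Submodule.map_id]
        rw [hψdef, Submodule.map_comp, h7, hmap]
      -- intersection identity
      have hBev : B e v = -1 := by
        rw [hvdef, map_sub, hBee, hBef]; ring
      have hρe : ρ e = f := by
        rw [hρ, hBev, hvdef]; module
      have hint : N₂ ⊓ N' = (N ⊓ N') ⊔ Submodule.span k {f} := by
        apply le_antisymm
        · rintro x ⟨⟨u, huN, rfl⟩, hxN'⟩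
          have hBue : B u e = 0 := hBNN u huN e heN
          have hBuv : B u v = -(B u f) := by rw [hvdef, map_sub, hBue]; ring
          set c := B u f with hcdef
          have hxy : ρ u = (u - c • e) + c • f := by
            rw [hρ, hBuv, hvdef]; module
          have hyN : u - c • e ∈ N := Submodule.sub_mem _ huN (Submodule.smul_mem _ _ heN)
          have hyN' : u - c • e ∈ N' := by
            have : u - c • e = ρ u - c • f := by rw [hxy]; abel
            rw [this]
            exact Submodule.sub_mem _ hxN' (Submodule.smul_mem _ _ hfN')
          exact Submodule.mem_sup.mpr ⟨u - c • e, ⟨hyN, hyN'⟩, c • f,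
            Submodule.smul_mem _ _ (Submodule.mem_span_singleton_self f), hxy.symm⟩
        · apply sup_le
          · rintro w ⟨hwN, hwN'⟩
            have hBwv : B w v = 0 := by
              rw [hvdef, map_sub, hBNN w hwN e heN, hBN'N' w hwN' f hfN']; ring
            have hρw : ρ w = w := by rw [hρ, hBwv, zero_smul, add_zero]
            exact ⟨⟨w, hwN, hρw⟩, hwN'⟩
          · rw [Submodule.span_le, Set.singleton_subset_iff]
            exact ⟨⟨e, heN, hρe⟩, hfN'⟩
      have hfne0 : f ≠ 0 := by
        intro h
        rw [h, map_zero] at hBef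
        exact one_ne_zero hBef.symm
      have hdisj : (N ⊓ N') ⊓ Submodule.span k {f} = ⊥ := by
        rw [Submodule.eq_bot_iff]
        rintro x ⟨⟨hxN, _⟩, hxs⟩
        obtain ⟨c, rfl⟩ := Submodule.mem_span_singleton.mp hxs
        by_contra hne
        have hcne : c ≠ 0 := fun h => hne (by rw [h, zero_smul])
        exact hfN (by
          have := Submodule.smul_mem N c⁻¹ hxN
          rwa [smul_smul, inv_mul_cancel₀ hcne, one_smul] at this)
      have hq2 : finrank k ↥(N₂ ⊓ N') = finrank k ↥(N ⊓ N') + 1 := by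
        rw [hint]
        have hsum := Submodule.finrank_sup_add_finrank_inf_eq (N ⊓ N') (Submodule.span k {f})
        rw [hdisj, finrank_bot, finrank_span_singleton hfne0] at hsum
        omega
      have hih := ih N₂ N' hN₂ hN' ψ hψbij hψiso hmapψ (by omega)
      have hdetψ : LinearMap.det ψ = LinearMap.det φ * LinearMap.det ρ := LinearMap.det_comp φ ρ
      rw [hdetρ] at hdetψ
      rw [hih] at hdetψ
      calc LinearMap.det φ = (LinearMap.det φ * (-1)) * (-1) := by ring
        _ = (-1 : k) ^ m * (-1) := by rw [← hdetψ]
        _ = (-1 : k) ^ (m + 1) := (pow_succ _ _).symm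
  exact key _ N N' hN hN' φ hbij hiso hmap rfl
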